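/- Let σ ≥ 0, x* ∈ C^n with |x*_i| = 1, Z* = x* conj(x*)ᵀ, and M the Hermitian matrix with M_{ij} = e^{−σ²/2}Z*_{ij} for i ≠ j, M_{ii} = 1. Then for every Z in C = {Z ∈ H_n : Z ⪰ 0, Z_{ii} = 1}, one has ⟨M, Z* − Z⟩ ≥ (e^{−σ²/2}/2) ‖Z* − Z‖₂², where ‖·‖₂ is the Frobenius norm on C^{n×n} and ⟨M, N⟩ = Tr(M conj(N)ᵀ). -/

import Mathlib

open scoped ComplexOrder

open Finset

/-- Hermitian trace inner product `⟨M,N⟩ = Tr(M conj(N)ᵀ)` on complex matrices. -/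
noncomputable def ipC {n : ℕ} (M N : Matrix (Fin n) (Fin n) ℂ) : ℂ :=
  ∑ i, ∑ j, M i j * star (N i j)

/-- Off-diagonal entries of a PSD matrix with unit diagonal have modulus at most 1. -/
lemma abs_entry_le_one {n : ℕ} (Z : Matrix (Fin n) (Fin n) ℂ)
    (hZpsd : Z.PosSemidef) (hZdiag : ∀ i, Z i i = 1) (i j : Fin n) (hij : i ≠ j) :
    ‖Z i j‖ ≤ 1 := by
  have hherm := hZpsd.1
  have hji : Z j i = star (Z i j) := by
    have := congrFun (congrFun hherm j) i
    simpa [Matrix.conjTranspose_apply] using this.symm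
  set x : Fin n → ℂ := Pi.single i 1 + Pi.single j (-(star (Z i j))) with hx
  have h0 := hZpsd.dotProduct_mulVec_nonneg x
  have hq : dotProduct (star x) (Z.mulVec x)
      = ((1 - ‖Z i j‖ ^ 2 : ℝ) : ℂ) := by
    have hxs : star x = Pi.single i 1 + Pi.single j (-(Z i j)) := by
      funext k
      by_cases hk : k = i <;> by_cases hk' : k = j <;>
        simp [hx, Pi.single_apply, hk, hk', hij, Pi.add_apply]
    rw [hxs, hx, Matrix.mulVec_add, Matrix.mulVec_single, Matrix.mulVec_single]
    rw [add_dotProduct, dotProduct_add, dotProduct_add]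
    simp only [single_dotProduct, Pi.add_apply, Pi.smul_apply, op_smul_eq_mul, Matrix.col_apply]
    rw [hZdiag i, hZdiag j, hji]
    have hzz : Z i j * star (Z i j) = ((‖Z i j‖ ^ 2 : ℝ) : ℂ) := by
      rw [Complex.star_def, Complex.mul_conj]; norm_cast; rw [Complex.sq_norm]
    rw [show ((1 - ‖Z i j‖ ^ 2 : ℝ) : ℂ)
        = 1 - Z i j * star (Z i j) by rw [hzz]; push_cast; ring]
    ring
  rw [hq] at h0
  have h1 : (0:ℝ) ≤ 1 - ‖Z i j‖ ^ 2 := by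
    exact_mod_cast Complex.zero_le_real.mp h0
  nlinarith [norm_nonneg (Z i j)]

theorem stmt_8 {n : ℕ} (σ : ℝ) (hσ : 0 ≤ σ)
    (xstar : Fin n → ℂ) (hx : ∀ i, ‖xstar i‖ = 1)
    (Zstar : Matrix (Fin n) (Fin n) ℂ)
    (hZstar : ∀ i j, Zstar i j = xstar i * star (xstar j))
    (M : Matrix (Fin n) (Fin n) ℂ)
    (hM : ∀ i j, M i j =
      if i = j then 1 else (Real.exp (-σ^2/2) : ℂ) * Zstar i j)
    (Z : Matrix (Fin n) (Fin n) ℂ)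
    (hZpsd : Z.PosSemidef) (hZdiag : ∀ i, Z i i = 1) :
    (Real.exp (-σ^2/2) / 2) * ∑ i, ∑ j, ‖Zstar i j - Z i j‖ ^ 2 ≤
      (ipC M (Zstar - Z)).re := by
  set c : ℝ := Real.exp (-σ^2/2) with hc
  have hcpos : 0 < c := Real.exp_pos _
  rw [ipC]
  simp only [Complex.re_sum]
  rw [Finset.mul_sum]
  refine Finset.sum_le_sum fun i _ => ?_
  rw [Finset.mul_sum]
  refine Finset.sum_le_sum fun j _ => ?_
  rcases eq_or_ne i j with h | h
  · subst h
    have hzs : Zstar i i = 1 := by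
      rw [hZstar, Complex.star_def, Complex.mul_conj, Complex.normSq_eq_norm_sq, hx]
      norm_num
    simp [Matrix.sub_apply, hzs, hZdiag i]
  · have hMij : M i j = (c : ℂ) * Zstar i j := by rw [hM]; simp [h]
    set w : ℂ := Zstar i j with hw
    set z : ℂ := Z i j with hz
    have hwabs : ‖w‖ = 1 := by
      rw [hw, hZstar, Complex.star_def, norm_mul, hx, Complex.norm_conj, hx]; norm_num
    have hzabs : ‖z‖ ≤ 1 := abs_entry_le_one Z hZpsd hZdiag i j h
    have hww : w * star w = (1 : ℂ) := by
      rw [Complex.star_def, Complex.mul_conj]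
      norm_cast
      rw [Complex.normSq_eq_norm_sq, hwabs]; norm_num
    have hre : (M i j * star ((Zstar - Z) i j)).re = c * (1 - (w * star z).re) := by
      rw [Matrix.sub_apply, hMij, ← hw, ← hz, mul_assoc, Complex.re_ofReal_mul]
      rw [show w * star (w - z) = 1 - w * star z by rw [star_sub, mul_sub, hww]]
      rw [Complex.sub_re, Complex.one_re]
    rw [hre]
    have habs : ‖Zstar i j - Z i j‖ ^ 2
        = Complex.normSq w + Complex.normSq z - 2 * (w * star z).re := by
      rw [← hw, ← hz, Complex.sq_norm, Complex.normSq_sub, Complex.star_def]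
    rw [habs]
    have h1 : Complex.normSq w = 1 := by
      rw [Complex.normSq_eq_norm_sq, hwabs]; norm_num
    have h2 : Complex.normSq z ≤ 1 := by
      rw [Complex.normSq_eq_norm_sq]; nlinarith [norm_nonneg z]
    nlinarith
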